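/- With the twisted GKLO operators as in the context: for every i ∈ I and 1 ≤ k ≤ m_i, the composition κ'_{i,k} ∘ κ_{i,k} is the multiplication operator M(g), where g = R_i(ξ_{i,k}) · ∏_{j ∈ {i−1,i+1}} ∏_{l=1}^{m_j}(ξ_{i,k}² − (γ_{j,l} + ½ℏ)²) / [4(ξ_{i,k} − ½ℏ)(ξ_{i,k} + ½ℏ) · ∏_{1≤l≤m_i, l≠k}(ξ_{i,k}² − γ_{i,l}²)(ξ_{i,k}² − ξ_{i,l}²)]. -/
import Mathlib


/- Twisted GKLO representation setup (type AI).
   Indices: `i ∈ I = {1,…,n−1}`, `1 ≤ k ≤ m i`, with conventions `m 0 = m n = 0`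
   (and `lam 0 = lam n = 0`), so that the indeterminates are exactly
   `ℏ`, `γ_{i,k}` (`i ∈ I`, `1 ≤ k ≤ m i`), `r_{i,t}` (`i ∈ I`, `1 ≤ t ≤ lam i`). -/

noncomputable section

/-- The indexing type of the indeterminates: `ℏ`, the `γ_{i,k}` and the `r_{i,t}`. -/
abbrev GVar (n : ℕ) (m lam : ℕ → ℕ) : Type :=
  Unit ⊕ ((Σ i : Fin (n + 1), Fin (m i)) ⊕ (Σ i : Fin (n + 1), Fin (lam i)))

/-- `F`, the fraction field of the polynomial ring over `ℂ` in the indeterminates. -/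
abbrev GF (n : ℕ) (m lam : ℕ → ℕ) : Type :=
  FractionRing (MvPolynomial (GVar n m lam) ℂ)

/-- The indeterminate `ℏ`. -/
def hb (n : ℕ) (m lam : ℕ → ℕ) : GF n m lam :=
  algebraMap (MvPolynomial (GVar n m lam) ℂ) (GF n m lam) (MvPolynomial.X (Sum.inl ()))

/-- The indeterminate `γ_{i,k}` (for `1 ≤ k ≤ m i`, `i ≤ n`; junk value `0` otherwise). -/
def gam (n : ℕ) (m lam : ℕ → ℕ) (i k : ℕ) : GF n m lam :=
  if h : i < n + 1 ∧ k - 1 < m i then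
    algebraMap (MvPolynomial (GVar n m lam) ℂ) (GF n m lam)
      (MvPolynomial.X (Sum.inr (Sum.inl ⟨⟨i, h.1⟩, ⟨k - 1, h.2⟩⟩)))
  else 0

/-- The indeterminate `r_{i,t}` (for `1 ≤ t ≤ lam i`, `i ≤ n`; junk value `0` otherwise). -/
def rv (n : ℕ) (m lam : ℕ → ℕ) (i t : ℕ) : GF n m lam :=
  if h : i < n + 1 ∧ t - 1 < lam i then
    algebraMap (MvPolynomial (GVar n m lam) ℂ) (GF n m lam)
      (MvPolynomial.X (Sum.inr (Sum.inr ⟨⟨i, h.1⟩, ⟨t - 1, h.2⟩⟩)))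
  else 0

/-- `ξ_{i,k} = γ_{i,k} + ℏ`. -/
def xi (n : ℕ) (m lam : ℕ → ℕ) (i k : ℕ) : GF n m lam :=
  gam n m lam i k + hb n m lam

/-- `R_i(x) = ∏_{t=1}^{λ_i} (x² − r_{i,t}²)`. -/
def RR (n : ℕ) (m lam : ℕ → ℕ) (i : ℕ) (x : GF n m lam) : GF n m lam :=
  ∏ t ∈ Finset.Icc 1 (lam i), (x ^ 2 - rv n m lam i t ^ 2)

/-- The coefficient `c_{i,k}` of the twisted GKLO operator `κ_{i,k}`. -/
def cc (n : ℕ) (m lam : ℕ → ℕ) (i k : ℕ) : GF n m lam :=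
  ((∏ l ∈ Finset.Icc 1 (m (i + 1)),
      (gam n m lam i k ^ 2 - (gam n m lam (i + 1) l + hb n m lam / 2) ^ 2)) *
    ∏ l ∈ Finset.Icc 1 (m (i - 1)),
      (gam n m lam i k + gam n m lam (i - 1) l + hb n m lam / 2)) /
  (2 * (gam n m lam i k - hb n m lam / 2) *
    ∏ l ∈ (Finset.Icc 1 (m i)).erase k, (gam n m lam i k ^ 2 - gam n m lam i l ^ 2))

/-- The coefficient `c'_{i,k}` of the twisted GKLO operator `κ'_{i,k}`. -/
def cc' (n : ℕ) (m lam : ℕ → ℕ) (i k : ℕ) : GF n m lam :=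
  (RR n m lam i (xi n m lam i k) *
    ∏ l ∈ Finset.Icc 1 (m (i - 1)),
      (xi n m lam i k - gam n m lam (i - 1) l - hb n m lam / 2)) /
  (2 * (gam n m lam i k + 3 * hb n m lam / 2) *
    ∏ l ∈ (Finset.Icc 1 (m i)).erase k, (xi n m lam i k ^ 2 - xi n m lam i l ^ 2))

/-- `M(f)`, the multiplication operator `x ↦ f·x`, as a `ℂ`-linear endomorphism of `F`. -/
def Mop (n : ℕ) (m lam : ℕ → ℕ) (f : GF n m lam) : Module.End ℂ (GF n m lam) :=
  LinearMap.mulLeft ℂ f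

/-- `κ_{i,k} = M(c_{i,k}) ∘ σ⁻_{i,k}`, where `σ` is the family of automorphisms `σ⁻`. -/
def kap (n : ℕ) (m lam : ℕ → ℕ) (σ : ℕ → ℕ → (GF n m lam ≃ₐ[ℂ] GF n m lam))
    (i k : ℕ) : Module.End ℂ (GF n m lam) :=
  Mop n m lam (cc n m lam i k) * (σ i k).toLinearMap

/-- `κ'_{i,k} = M(c'_{i,k}) ∘ σ⁺_{i,k}`, where `σ` is the family of automorphisms `σ⁺`. -/
def kap' (n : ℕ) (m lam : ℕ → ℕ) (σ : ℕ → ℕ → (GF n m lam ≃ₐ[ℂ] GF n m lam))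
    (i k : ℕ) : Module.End ℂ (GF n m lam) :=
  Mop n m lam (cc' n m lam i k) * (σ i k).toLinearMap

/-- The Cartan matrix of `sl_n`: `a_{ii} = 2`, `a_{ij} = −1` if `|i−j|=1`, else `0`. -/
def cartan (i j : ℕ) : ℤ :=
  if i = j then 2 else if i + 1 = j ∨ j + 1 = i then -1 else 0

set_option maxHeartbeats 2000000 in
theorem gklo_kappaP_comp_kappa (n : ℕ) (hn : 2 ≤ n) (m lam : ℕ → ℕ)
    (hm0 : m 0 = 0) (hmn : m n = 0) (hlam0 : lam 0 = 0) (hlamn : lam n = 0)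
    (σm σp : ℕ → ℕ → (GF n m lam ≃ₐ[ℂ] GF n m lam))
    (hσmh : ∀ i k, σm i k (hb n m lam) = hb n m lam)
    (hσph : ∀ i k, σp i k (hb n m lam) = hb n m lam)
    (hσmr : ∀ i k i' t, σm i k (rv n m lam i' t) = rv n m lam i' t)
    (hσpr : ∀ i k i' t, σp i k (rv n m lam i' t) = rv n m lam i' t)
    (hσmg : ∀ i k i' k', 1 ≤ i' → i' ≤ n - 1 → 1 ≤ k' → k' ≤ m i' →
      σm i k (gam n m lam i' k') =
        if i' = i ∧ k' = k then gam n m lam i k - hb n m lam else gam n m lam i' k')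
    (hσpg : ∀ i k i' k', 1 ≤ i' → i' ≤ n - 1 → 1 ≤ k' → k' ≤ m i' →
      σp i k (gam n m lam i' k') =
        if i' = i ∧ k' = k then gam n m lam i k + hb n m lam else gam n m lam i' k')
    (i k : ℕ) (hi : 1 ≤ i) (hi' : i ≤ n - 1) (hk : 1 ≤ k) (hk' : k ≤ m i) :
    kap' n m lam σp i k * kap n m lam σm i k =
      Mop n m lam
        (RR n m lam i (xi n m lam i k) *
            ((∏ l ∈ Finset.Icc 1 (m (i - 1)),
                (xi n m lam i k ^ 2 - (gam n m lam (i - 1) l + hb n m lam / 2) ^ 2)) *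
              ∏ l ∈ Finset.Icc 1 (m (i + 1)),
                (xi n m lam i k ^ 2 - (gam n m lam (i + 1) l + hb n m lam / 2) ^ 2)) /
          (4 * (xi n m lam i k - hb n m lam / 2) * (xi n m lam i k + hb n m lam / 2) *
            ∏ l ∈ (Finset.Icc 1 (m i)).erase k,
              ((xi n m lam i k ^ 2 - gam n m lam i l ^ 2) *
                (xi n m lam i k ^ 2 - xi n m lam i l ^ 2)))) := by

  classical
  -- σp ∘ σm = id
  have hinv : ∀ x : GF n m lam, σp i k (σm i k x) = x := by
    have hcomp :
        (((σp i k).toAlgHom.comp (σm i k).toAlgHom : GF n m lam →ₐ[ℂ] GF n m lam) :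
          GF n m lam →+* GF n m lam) = RingHom.id (GF n m lam) := by
      apply IsLocalization.ringHom_ext (nonZeroDivisors (MvPolynomial (GVar n m lam) ℂ))
      apply MvPolynomial.ringHom_ext
      · intro r
        have h1 : (algebraMap (MvPolynomial (GVar n m lam) ℂ) (GF n m lam))
            (MvPolynomial.C r) = algebraMap ℂ (GF n m lam) r := by
          rw [IsScalarTower.algebraMap_apply ℂ (MvPolynomial (GVar n m lam) ℂ) (GF n m lam) r,
            MvPolynomial.algebraMap_eq]
        simp [h1]
      · intro v
        rcases v with _ | (⟨i', κ⟩ | ⟨i', t⟩)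
        · show σp i k (σm i k (hb n m lam)) = hb n m lam
          rw [hσmh, hσph]
        · -- a γ variable
          have hmpos : 0 < m (i' : ℕ) := lt_of_le_of_lt (Nat.zero_le _) κ.2
          have hne0 : (i' : ℕ) ≠ 0 := by intro h0; rw [h0, hm0] at hmpos; omega
          have hnen : (i' : ℕ) ≠ n := by intro h0; rw [h0, hmn] at hmpos; omega
          have hi'lt : (i' : ℕ) < n + 1 := i'.2
          have hg : (algebraMap (MvPolynomial (GVar n m lam) ℂ) (GF n m lam))
              (MvPolynomial.X (Sum.inr (Sum.inl ⟨i', κ⟩))) =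
              gam n m lam (i' : ℕ) ((κ : ℕ) + 1) := by
            rw [gam, dif_pos ⟨hi'lt, by simpa using κ.2⟩]
            rfl
          show σp i k (σm i k ((algebraMap (MvPolynomial (GVar n m lam) ℂ) (GF n m lam))
              (MvPolynomial.X (Sum.inr (Sum.inl ⟨i', κ⟩))))) = _
          rw [hg, hσmg i k (i' : ℕ) ((κ : ℕ) + 1) (by omega) (by omega) (by omega)
            (by omega)]
          by_cases hc : (i' : ℕ) = i ∧ (κ : ℕ) + 1 = k
          · rw [if_pos hc, map_sub, hσph,
              hσpg i k i k hi hi' hk hk', if_pos ⟨rfl, rfl⟩, RingHom.comp_apply,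
              RingHom.id_apply, hg, hc.2, hc.1]
            ring
          · rw [if_neg hc, hσpg i k (i' : ℕ) ((κ : ℕ) + 1) (by omega) (by omega) (by omega)
              (by omega), if_neg hc, RingHom.comp_apply, RingHom.id_apply, hg]
        · -- an r variable
          have hmpos : 0 < lam (i' : ℕ) := lt_of_le_of_lt (Nat.zero_le _) t.2
          have hg : (algebraMap (MvPolynomial (GVar n m lam) ℂ) (GF n m lam))
              (MvPolynomial.X (Sum.inr (Sum.inr ⟨i', t⟩))) =
              rv n m lam (i' : ℕ) ((t : ℕ) + 1) := by
            rw [rv, dif_pos ⟨i'.2, by simpa using t.2⟩]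
            rfl
          show σp i k (σm i k ((algebraMap (MvPolynomial (GVar n m lam) ℂ) (GF n m lam))
              (MvPolynomial.X (Sum.inr (Sum.inr ⟨i', t⟩))))) = _
          rw [hg, hσmr, hσpr, RingHom.comp_apply, RingHom.id_apply, hg]
    intro x
    exact RingHom.congr_fun hcomp x
  -- basic facts about σp on the generators appearing in cc
  have hgk : σp i k (gam n m lam i k) = gam n m lam i k + hb n m lam := by
    rw [hσpg i k i k hi hi' hk hk', if_pos ⟨rfl, rfl⟩]
  have hgp : ∀ l ∈ Finset.Icc 1 (m (i + 1)), σp i k (gam n m lam (i + 1) l) =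
      gam n m lam (i + 1) l := by
    intro l hl
    rw [Finset.mem_Icc] at hl
    have hne : i + 1 ≠ n := by intro h0; rw [h0, hmn] at hl; omega
    rw [hσpg i k (i + 1) l (by omega) (by omega) hl.1 hl.2, if_neg (by omega)]
  have hgm : ∀ l ∈ Finset.Icc 1 (m (i - 1)), σp i k (gam n m lam (i - 1) l) =
      gam n m lam (i - 1) l := by
    intro l hl
    rw [Finset.mem_Icc] at hl
    have hne : i - 1 ≠ 0 := by intro h0; rw [h0, hm0] at hl; omega
    rw [hσpg i k (i - 1) l (by omega) (by omega) hl.1 hl.2, if_neg (by omega)]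
  have hgl : ∀ l ∈ (Finset.Icc 1 (m i)).erase k, σp i k (gam n m lam i l) =
      gam n m lam i l := by
    intro l hl
    have hlk : l ≠ k := Finset.ne_of_mem_erase hl
    have hl' := Finset.mem_of_mem_erase hl
    rw [Finset.mem_Icc] at hl'
    rw [hσpg i k i l hi hi' hl'.1 hl'.2, if_neg (by tauto)]
  -- computing σp (cc)
  have hsc : σp i k (cc n m lam i k) =
      ((∏ l ∈ Finset.Icc 1 (m (i + 1)),
          ((gam n m lam i k + hb n m lam) ^ 2 -
            (gam n m lam (i + 1) l + hb n m lam / 2) ^ 2)) *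
        ∏ l ∈ Finset.Icc 1 (m (i - 1)),
          (gam n m lam i k + hb n m lam + gam n m lam (i - 1) l + hb n m lam / 2)) /
      (2 * (gam n m lam i k + hb n m lam - hb n m lam / 2) *
        ∏ l ∈ (Finset.Icc 1 (m i)).erase k,
          ((gam n m lam i k + hb n m lam) ^ 2 - gam n m lam i l ^ 2)) := by
    rw [cc, map_div₀]
    congr 1
    · rw [map_mul, map_prod, map_prod]
      congr 1
      · refine Finset.prod_congr rfl fun l hl => ?_
        rw [map_sub, map_pow, map_pow, hgk, map_add, hgp l hl, map_div₀, hσph, map_ofNat]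
      · refine Finset.prod_congr rfl fun l hl => ?_
        rw [map_add, map_add, hgk, hgm l hl, map_div₀, hσph, map_ofNat]
    · rw [map_mul, map_mul, map_ofNat, map_sub, hgk, map_div₀, hσph, map_ofNat, map_prod]
      congr 1
      refine Finset.prod_congr rfl fun l hl => ?_
      rw [map_sub, map_pow, map_pow, hgk, hgl l hl]
  -- the field identity
  have hfield : cc' n m lam i k * σp i k (cc n m lam i k) =
      RR n m lam i (xi n m lam i k) *
          ((∏ l ∈ Finset.Icc 1 (m (i - 1)),
              (xi n m lam i k ^ 2 - (gam n m lam (i - 1) l + hb n m lam / 2) ^ 2)) *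
            ∏ l ∈ Finset.Icc 1 (m (i + 1)),
              (xi n m lam i k ^ 2 - (gam n m lam (i + 1) l + hb n m lam / 2) ^ 2)) /
        (4 * (xi n m lam i k - hb n m lam / 2) * (xi n m lam i k + hb n m lam / 2) *
          ∏ l ∈ (Finset.Icc 1 (m i)).erase k,
            ((xi n m lam i k ^ 2 - gam n m lam i l ^ 2) *
              (xi n m lam i k ^ 2 - xi n m lam i l ^ 2))) := by
    rw [hsc, cc', div_mul_div_comm]
    have hP : ∏ l ∈ Finset.Icc 1 (m (i - 1)),
        (xi n m lam i k ^ 2 - (gam n m lam (i - 1) l + hb n m lam / 2) ^ 2) =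
        (∏ l ∈ Finset.Icc 1 (m (i - 1)),
          (xi n m lam i k - gam n m lam (i - 1) l - hb n m lam / 2)) *
        ∏ l ∈ Finset.Icc 1 (m (i - 1)),
          (gam n m lam i k + hb n m lam + gam n m lam (i - 1) l + hb n m lam / 2) := by
      rw [← Finset.prod_mul_distrib]
      refine Finset.prod_congr rfl fun l _ => ?_
      simp only [xi]
      ring
    have hE : ∏ l ∈ (Finset.Icc 1 (m i)).erase k,
        ((xi n m lam i k ^ 2 - gam n m lam i l ^ 2) *
          (xi n m lam i k ^ 2 - xi n m lam i l ^ 2)) =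
        (∏ l ∈ (Finset.Icc 1 (m i)).erase k,
          (xi n m lam i k ^ 2 - gam n m lam i l ^ 2)) *
        ∏ l ∈ (Finset.Icc 1 (m i)).erase k,
          (xi n m lam i k ^ 2 - xi n m lam i l ^ 2) := Finset.prod_mul_distrib
    rw [hP, hE]
    simp only [xi]
    congr 1
    · ring
    · ring
  apply LinearMap.ext
  intro x
  simp only [kap, kap', Mop, Module.End.mul_apply, LinearMap.mulLeft_apply,
    AlgEquiv.toLinearMap_apply, map_mul, hinv, ← mul_assoc, hfield]
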